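/- In every execution of algorithm Counting-Backoff against a 1-activating adversary, the following invariant holds at the end of every round in whose beginning some k > 0 stations are active: each station that remains active and has a positive backoff_counter holds a distinct value from the interval [1, k]; these values are assigned in the inverse order of the stations' activation times (the later a station was activated, the smaller its value); and the only value in [1, k] that may be unassigned is 1. Hence the positive values of backoff_counter may be interpreted as positions on a global last-in-first-out stack of active stations, with the station whose backoff_counter equals 1 at the top. -/

import Mathlib

/-- Admissibility of a 1-activating injection pattern `a` (in round `t`, a fresh passive
station labelled `t` is activated with `a t` packets, when `a t > 0`) for the leaky-bucket
adversary of type `(ρ, b)`: in every contiguous interval of rounds the total number of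
injected packets is at most `ρ·|τ| + b`. -/
def Admissible (ρ : ℝ) (b : ℕ) (a : ℕ → ℕ) : Prop :=
  ∀ s n : ℕ, ((∑ t ∈ Finset.Ico s (s + n), a t : ℕ) : ℝ) ≤ ρ * n + b

/-- One round of algorithm Counting-Backoff on a channel with collision detection.
A configuration `c` assigns to every station `v` (identified with its activation round)
its number `c.1 v` of pending packets and its integer `c.2 v` = backoff_counter, both at
the beginning of the round.  An active station transmits iff its backoff_counter is `≤ 1`;
after a collision every active station increments its counter, after a silent round it
decrements it; a station whose own packet was heard sets the counter to 1 if it is still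
active, and a passive station has counter 0.  At the end of round `t` the station `t`
receives its `a t` injected packets (with counter 0). -/
def cbStep (a : ℕ → ℕ) (t : ℕ) (c : (ℕ → ℕ) × (ℕ → ℤ)) : (ℕ → ℕ) × (ℕ → ℤ) :=
  let pend := c.1
  let ctr := c.2
  let tx : Finset ℕ := (Finset.range t).filter fun v => 0 < pend v ∧ ctr v ≤ 1
  (fun v => (if v ∈ tx ∧ tx.card = 1 then pend v - 1 else pend v) + (if v = t then a t else 0),
   fun v =>
    if pend v = 0 then 0
    else if v ∈ tx ∧ tx.card = 1 then (if pend v - 1 = 0 then 0 else 1)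
    else if 2 ≤ tx.card then ctr v + 1
    else if tx.card = 0 then ctr v - 1
    else ctr v)

/-- The configuration of the execution of Counting-Backoff against the 1-activating
injection pattern `a` at the beginning of round `t`: `(cbCfg a t).1 v` is the number of
packets pending at station `v` and `(cbCfg a t).2 v` is its backoff_counter. -/
def cbCfg (a : ℕ → ℕ) : ℕ → (ℕ → ℕ) × (ℕ → ℤ)
  | 0 => (fun _ => 0, fun _ => 0)
  | t + 1 => cbStep a t (cbCfg a t)

namespace CBAux

def txSet (a : ℕ → ℕ) (t : ℕ) : Finset ℕ :=
  (Finset.range t).filter fun v => 0 < (cbCfg a t).1 v ∧ (cbCfg a t).2 v ≤ 1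

lemma pend_succ (a : ℕ → ℕ) (t v : ℕ) : (cbCfg a (t+1)).1 v =
    (if v ∈ txSet a t ∧ (txSet a t).card = 1 then (cbCfg a t).1 v - 1 else (cbCfg a t).1 v)
      + (if v = t then a t else 0) := rfl

lemma ctr_succ (a : ℕ → ℕ) (t v : ℕ) : (cbCfg a (t+1)).2 v =
    if (cbCfg a t).1 v = 0 then 0
    else if v ∈ txSet a t ∧ (txSet a t).card = 1 then (if (cbCfg a t).1 v - 1 = 0 then 0 else 1)
    else if 2 ≤ (txSet a t).card then (cbCfg a t).2 v + 1
    else if (txSet a t).card = 0 then (cbCfg a t).2 v - 1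
    else (cbCfg a t).2 v := rfl

structure Inv (a : ℕ → ℕ) (t : ℕ) : Prop where
  bound : ∀ v, t ≤ v → (cbCfg a t).1 v = 0
  passive : ∀ v, (cbCfg a t).1 v = 0 → (cbCfg a t).2 v = 0
  nonneg : ∀ v, 0 ≤ (cbCfg a t).2 v
  anti : ∀ v w, 0 < (cbCfg a t).1 v → 0 < (cbCfg a t).1 w → v < w →
      (cbCfg a t).2 w < (cbCfg a t).2 v
  surj : ∀ v (j : ℤ), 0 < (cbCfg a t).1 v → 2 ≤ j → j ≤ (cbCfg a t).2 v →
      ∃ w, 0 < (cbCfg a t).1 w ∧ (cbCfg a t).2 w = j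

variable {a : ℕ → ℕ} {t : ℕ}

lemma active_lt (h : Inv a t) {v : ℕ} (hv : 0 < (cbCfg a t).1 v) : v < t := by
  by_contra h'
  have := h.bound v (le_of_not_gt h')
  omega

lemma mem_tx (h : Inv a t) {v : ℕ} (hv : 0 < (cbCfg a t).1 v) :
    v ∈ txSet a t ↔ (cbCfg a t).2 v ≤ 1 := by
  simp [txSet, Finset.mem_filter, Finset.mem_range, active_lt h hv, hv]

lemma ctr_inj (h : Inv a t) {v w : ℕ} (hv : 0 < (cbCfg a t).1 v) (hw : 0 < (cbCfg a t).1 w)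
    (hc : (cbCfg a t).2 v = (cbCfg a t).2 w) : v = w := by
  rcases lt_trichotomy v w with h1 | h1 | h1
  · have := h.anti v w hv hw h1; omega
  · exact h1
  · have := h.anti w v hw hv h1; omega

lemma tx_card_le (h : Inv a t) : (txSet a t).card ≤ 2 := by
  have h2 : (txSet a t).card ≤ ({0, 1} : Finset ℤ).card := by
    apply Finset.card_le_card_of_injOn (fun v => (cbCfg a t).2 v)
    · intro v hv
      obtain ⟨-, hv1, hv2⟩ := Finset.mem_filter.mp hv
      have := h.nonneg v
      simp only [Finset.coe_insert, Finset.coe_singleton, Set.mem_insert_iff, Set.mem_singleton_iff, Finset.mem_insert, Finset.mem_singleton]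
      omega
    · intro v hv w hw hvw
      obtain ⟨-, hv1, -⟩ := Finset.mem_filter.mp hv
      obtain ⟨-, hw1, -⟩ := Finset.mem_filter.mp hw
      exact ctr_inj h hv1 hw1 hvw
  simpa using h2

lemma exists_big (h : Inv a t) (B : Finset ℕ) (lo : ℤ)
    (hBA : ∀ v ∈ B, 0 < (cbCfg a t).1 v)
    (hlo : ∀ v ∈ B, lo ≤ (cbCfg a t).2 v) (hne : B.Nonempty) :
    ∃ v ∈ B, lo + B.card - 1 ≤ (cbCfg a t).2 v := by
  set f : ℕ → ℤ := fun v => (cbCfg a t).2 v with hf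
  have hne' : (B.image f).Nonempty := hne.image f
  obtain ⟨v, hvB, hfv⟩ := Finset.mem_image.mp ((B.image f).max'_mem hne')
  refine ⟨v, hvB, ?_⟩
  have hcard : (B.image f).card = B.card := by
    apply Finset.card_image_of_injOn
    intro x hx y hy hxy
    exact ctr_inj h (hBA x hx) (hBA y hy) hxy
  have hsub : B.image f ⊆ Finset.Icc lo ((B.image f).max' hne') := by
    intro j hj
    obtain ⟨w, hwB, rfl⟩ := Finset.mem_image.mp hj
    exact Finset.mem_Icc.mpr ⟨hlo w hwB, Finset.le_max' _ _ hj⟩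
  have hle := Finset.card_le_card hsub
  rw [Int.card_Icc, hcard] at hle
  have hfv' : (cbCfg a t).2 v = (B.image f).max' hne' := hfv
  rw [← hfv'] at hle
  have := hlo v hvB
  omega

lemma count_ge (h : Inv a t) {v : ℕ} (hv : 0 < (cbCfg a t).1 v)
    (h2 : 2 ≤ (cbCfg a t).2 v) :
    (cbCfg a t).2 v - 1 + ((txSet a t).card : ℤ) ≤
      ((((Finset.range t).filter fun w => 0 < (cbCfg a t).1 w)).card : ℤ) := by
  set A := (Finset.range t).filter fun w => 0 < (cbCfg a t).1 w with hA
  set W := A.filter fun w => 2 ≤ (cbCfg a t).2 w with hW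
  have hmemA : ∀ w, 0 < (cbCfg a t).1 w → w ∈ A := by
    intro w hw
    exact Finset.mem_filter.mpr ⟨Finset.mem_range.mpr (active_lt h hw), hw⟩
  have hIcc : Finset.Icc (2:ℤ) ((cbCfg a t).2 v) ⊆ W.image (fun w => (cbCfg a t).2 w) := by
    intro j hj
    obtain ⟨hj1, hj2⟩ := Finset.mem_Icc.mp hj
    obtain ⟨w, hw1, hw2⟩ := h.surj v j hv hj1 hj2
    exact Finset.mem_image.mpr ⟨w, Finset.mem_filter.mpr ⟨hmemA w hw1, by omega⟩, hw2⟩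
  have hle1 : (Finset.Icc (2:ℤ) ((cbCfg a t).2 v)).card ≤ W.card :=
    (Finset.card_le_card hIcc).trans Finset.card_image_le
  rw [Int.card_Icc] at hle1
  have hdisj : Disjoint (txSet a t) W := by
    rw [Finset.disjoint_left]
    intro w hw hw'
    obtain ⟨-, -, hw2⟩ := Finset.mem_filter.mp hw
    obtain ⟨-, hw3⟩ := Finset.mem_filter.mp hw'
    omega
  have hsub : txSet a t ∪ W ⊆ A := by
    intro w hw
    rcases Finset.mem_union.mp hw with hw | hw
    · obtain ⟨hw0, hw1, -⟩ := Finset.mem_filter.mp hw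
      exact hmemA w hw1
    · exact Finset.mem_of_mem_filter w hw
  have := Finset.card_le_card hsub
  rw [Finset.card_union_of_disjoint hdisj] at this
  omega


lemma notin_tx (h : Inv a t) {v : ℕ} (hv : 0 < (cbCfg a t).1 v) (hvtx : v ∉ txSet a t) :
    2 ≤ (cbCfg a t).2 v := by
  by_contra h'
  exact hvtx ((mem_tx h hv).mpr (by omega))

lemma in_tx {v : ℕ} (hv : v ∈ txSet a t) :
    0 < (cbCfg a t).1 v ∧ (cbCfg a t).2 v ≤ 1 := (Finset.mem_filter.mp hv).2

lemma pend_eq (h : Inv a t) {v : ℕ} (hv : 0 < (cbCfg a t).1 v)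
    (hb : ¬(v ∈ txSet a t ∧ (txSet a t).card = 1)) :
    (cbCfg a (t+1)).1 v = (cbCfg a t).1 v := by
  have hne : v ≠ t := by have := active_lt h hv; omega
  rw [pend_succ, if_neg hb, if_neg hne]
  exact Nat.add_zero _

lemma ctr_silent (h0 : (txSet a t).card = 0) {v : ℕ} (hv : 0 < (cbCfg a t).1 v) :
    (cbCfg a (t+1)).2 v = (cbCfg a t).2 v - 1 := by
  rw [ctr_succ, if_neg (by omega), if_neg (fun h => by omega), if_neg (by omega), if_pos h0]

lemma ctr_coll (h2 : 2 ≤ (txSet a t).card) {v : ℕ} (hv : 0 < (cbCfg a t).1 v) :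
    (cbCfg a (t+1)).2 v = (cbCfg a t).2 v + 1 := by
  rw [ctr_succ, if_neg (by omega), if_neg (fun h => by omega), if_pos h2]

lemma ctr_skip (h1 : (txSet a t).card = 1) {v : ℕ} (hv : 0 < (cbCfg a t).1 v)
    (hvtx : v ∉ txSet a t) : (cbCfg a (t+1)).2 v = (cbCfg a t).2 v := by
  rw [ctr_succ, if_neg (by omega), if_neg (fun h => hvtx h.1), if_neg (by omega),
    if_neg (by omega)]

lemma ctr_back (h : Inv a t) {v : ℕ} (hv : 0 < (cbCfg a (t+1)).2 v) :
    0 < (cbCfg a t).1 v := by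
  by_contra h'
  rw [ctr_succ, if_pos (by omega)] at hv
  omega

namespace Step
variable {a : ℕ → ℕ} {t : ℕ}

lemma inv_step (ih : Inv a t) : Inv a (t+1) := by
  have hpt : (cbCfg a t).1 t = 0 := ih.bound t le_rfl
  have hcard2 : (txSet a t).card ≤ 2 := tx_card_le ih
  have hnotin : ∀ v, 0 < (cbCfg a t).1 v → v ∉ txSet a t → 2 ≤ (cbCfg a t).2 v := by
    intro v hv hvtx
    by_contra h'
    exact hvtx ((mem_tx ih hv).mpr (by omega))
  have hin : ∀ v ∈ txSet a t, 0 < (cbCfg a t).1 v ∧ (cbCfg a t).2 v ≤ 1 :=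
    fun v hv => (Finset.mem_filter.mp hv).2
  have hnt : ∀ v, 0 < (cbCfg a t).1 v → v ≠ t := by
    intro v hv
    have := active_lt ih hv
    omega
  -- pend unchanged for active stations not successfully transmitting
  have HP : ∀ w, 0 < (cbCfg a t).1 w → ¬(w ∈ txSet a t ∧ (txSet a t).card = 1) →
      (cbCfg a (t+1)).1 w = (cbCfg a t).1 w := by
    intro w hw hb
    rw [pend_succ, if_neg hb, if_neg (hnt w hw)]
    exact Nat.add_zero _
  have HC0 : (txSet a t).card = 0 → ∀ w, 0 < (cbCfg a t).1 w →
      (cbCfg a (t+1)).2 w = (cbCfg a t).2 w - 1 := by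
    intro h0 w hw
    rw [ctr_succ, if_neg (by omega), if_neg (fun h => by omega), if_neg (by omega), if_pos h0]
  have HC2 : 2 ≤ (txSet a t).card → ∀ w, 0 < (cbCfg a t).1 w →
      (cbCfg a (t+1)).2 w = (cbCfg a t).2 w + 1 := by
    intro h2 w hw
    rw [ctr_succ, if_neg (by omega), if_neg (fun h => by omega), if_pos h2]
  have HC1n : (txSet a t).card = 1 → ∀ w, 0 < (cbCfg a t).1 w → w ∉ txSet a t →
      (cbCfg a (t+1)).2 w = (cbCfg a t).2 w := by
    intro h1 w hw hwtx
    rw [ctr_succ, if_neg (by omega), if_neg (fun h => hwtx h.1), if_neg (by omega),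
      if_neg (by omega)]
  have hbound' : ∀ v, t + 1 ≤ v → (cbCfg a (t+1)).1 v = 0 := by
    intro v hv
    have h0 : (cbCfg a t).1 v = 0 := ih.bound v (by omega)
    have hne : v ≠ t := by omega
    rw [pend_succ, if_neg hne]
    split_ifs <;> omega
  have hact : ∀ v, 0 < (cbCfg a (t+1)).1 v → 0 < (cbCfg a t).1 v ∨ v = t := by
    intro v hv
    by_contra h'
    push_neg at h'
    have h0 : (cbCfg a t).1 v = 0 := by omega
    rw [pend_succ, if_neg h'.2] at hv
    split_ifs at hv <;> omega
  have hpassive' : ∀ v, (cbCfg a (t+1)).1 v = 0 → (cbCfg a (t+1)).2 v = 0 := by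
    intro v hv'
    rw [ctr_succ]
    by_cases hp0 : (cbCfg a t).1 v = 0
    · rw [if_pos hp0]
    · rw [if_neg hp0]
      rw [pend_succ] at hv'
      by_cases hb : v ∈ txSet a t ∧ (txSet a t).card = 1
      · rw [if_pos hb]
        rw [if_pos hb] at hv'
        have h1 : (cbCfg a t).1 v - 1 = 0 := by split_ifs at hv' <;> omega
        rw [if_pos h1]
      · rw [if_neg hb] at hv'
        exfalso
        split_ifs at hv' <;> omega
  -- counters stay nonnegative; moreover active non-transmitters have counter ≥ 2
  have hnonneg' : ∀ v, 0 ≤ (cbCfg a (t+1)).2 v := by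
    intro v
    have hnn := ih.nonneg v
    rw [ctr_succ]
    by_cases hp0 : (cbCfg a t).1 v = 0
    · rw [if_pos hp0]
    · rw [if_neg hp0]
      have hpv : 0 < (cbCfg a t).1 v := by omega
      by_cases hb : v ∈ txSet a t ∧ (txSet a t).card = 1
      · rw [if_pos hb]; split_ifs <;> omega
      · rw [if_neg hb]
        split_ifs with h2 h3
        · omega
        · have hvtx : v ∉ txSet a t := by
            rw [Finset.card_eq_zero] at h3
            simp [h3]
          have := hnotin v hpv hvtx
          omega
        · omega
  -- an active station (at t+1) that was active at t has positive counter at t+1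
  have hpos : ∀ v, 0 < (cbCfg a t).1 v → 0 < (cbCfg a (t+1)).1 v →
      1 ≤ (cbCfg a (t+1)).2 v := by
    intro v hpv hv
    have hnn := ih.nonneg v
    rw [ctr_succ, if_neg (by omega)]
    by_cases hb : v ∈ txSet a t ∧ (txSet a t).card = 1
    · rw [if_pos hb]
      split_ifs with h1
      · exfalso
        rw [pend_succ, if_pos hb, if_neg (hnt v hpv)] at hv
        omega
      · omega
    · rw [if_neg hb]
      split_ifs with h2 h3
      · omega
      · have hvtx : v ∉ txSet a t := by
          rw [Finset.card_eq_zero] at h3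
          simp [h3]
        have := hnotin v hpv hvtx
        omega
      · have hc1 : (txSet a t).card = 1 := by omega
        have hvtx : v ∉ txSet a t := fun h => hb ⟨h, hc1⟩
        have := hnotin v hpv hvtx
        omega
  have hanti' : ∀ v w, 0 < (cbCfg a (t+1)).1 v → 0 < (cbCfg a (t+1)).1 w → v < w →
      (cbCfg a (t+1)).2 w < (cbCfg a (t+1)).2 v := by
    intro v w hv hw hvw
    have hwlt : w < t + 1 := by
      by_contra h'
      have := hbound' w (by omega)
      omega
    have hpv : 0 < (cbCfg a t).1 v := by
      rcases hact v hv with h | h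
      · exact h
      · omega
    rcases hact w hw with hpw | hwt
    · -- both were active at t
      have hcc := ih.anti v w hpv hpw hvw
      have h012 : (txSet a t).card = 0 ∨ (txSet a t).card = 1 ∨ (txSet a t).card = 2 := by
        omega
      rcases h012 with h0 | h1 | h2
      · rw [HC0 h0 v hpv, HC0 h0 w hpw]; omega
      · by_cases hvtx : v ∈ txSet a t
        · by_cases hwtx : w ∈ txSet a t
          · exfalso
            have : 1 < (txSet a t).card :=
              Finset.one_lt_card.mpr ⟨v, hvtx, w, hwtx, by omega⟩
            omega
          · exfalso
            have := hnotin w hpw hwtx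
            have := (hin v hvtx).2
            omega
        · have hcv := hnotin v hpv hvtx
          rw [HC1n h1 v hpv hvtx]
          by_cases hwtx : w ∈ txSet a t
          · rw [ctr_succ, if_neg (by omega), if_pos ⟨hwtx, h1⟩]
            split_ifs <;> omega
          · rw [HC1n h1 w hpw hwtx]; omega
      · rw [HC2 (by omega) v hpv, HC2 (by omega) w hpw]; omega
    · -- w = t : counter of t is 0, counter of v is positive
      have hct : (cbCfg a (t+1)).2 w = 0 := by rw [hwt, ctr_succ, if_pos hpt]
      rw [hct]
      exact hpos v hpv hv
  refine ⟨hbound', hpassive', hnonneg', hanti', ?_⟩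
  intro v j hv h2 h3
  have hp0 : (cbCfg a t).1 v ≠ 0 := by
    intro h0
    rw [ctr_succ, if_pos h0] at h3
    omega
  have hpv : 0 < (cbCfg a t).1 v := by omega
  have hvlt := active_lt ih hpv
  have h012 : (txSet a t).card = 0 ∨ (txSet a t).card = 1 ∨ (txSet a t).card = 2 := by
    omega
  rcases h012 with h0 | h1 | hc2
  · rw [HC0 h0 v hpv] at h3
    obtain ⟨w, hw1, hw2⟩ := ih.surj v (j+1) hpv (by omega) (by omega)
    have hwtx : w ∉ txSet a t := by
      rw [Finset.card_eq_zero] at h0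
      simp [h0]
    refine ⟨w, ?_, ?_⟩
    · rw [HP w hw1 (fun h => by omega)]; exact hw1
    · rw [HC0 h0 w hw1]; omega
  · by_cases hvtx : v ∈ txSet a t
    · exfalso
      rw [ctr_succ, if_neg hp0, if_pos ⟨hvtx, h1⟩] at h3
      split_ifs at h3 <;> omega
    · rw [HC1n h1 v hpv hvtx] at h3
      obtain ⟨w, hw1, hw2⟩ := ih.surj v j hpv h2 h3
      have hwtx : w ∉ txSet a t := by
        intro h
        have := (hin w h).2
        omega
      refine ⟨w, ?_, ?_⟩
      · rw [HP w hw1 (fun h => hwtx h.1)]; exact hw1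
      · rw [HC1n h1 w hw1 hwtx]; exact hw2
  · rw [HC2 (by omega) v hpv] at h3
    by_cases hj : j = 2
    · have hne : (txSet a t).Nonempty := Finset.card_pos.mp (by omega)
      obtain ⟨u, hutx, hu⟩ := exists_big ih (txSet a t) 0
        (fun u hu => (hin u hu).1) (fun u _ => ih.nonneg u) hne
      have hcu : (cbCfg a t).2 u = 1 := by
        have := (hin u hutx).2
        rw [hc2] at hu
        omega
      have hpu := (hin u hutx).1
      refine ⟨u, ?_, ?_⟩
      · rw [HP u hpu (fun h => by omega)]; exact hpu
      · rw [HC2 (by omega) u hpu, hcu]; omega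
    · obtain ⟨w, hw1, hw2⟩ := ih.surj v (j-1) hpv (by omega) (by omega)
      refine ⟨w, ?_, ?_⟩
      · rw [HP w hw1 (fun h => by omega)]; exact hw1
      · rw [HC2 (by omega) w hw1]; omega

lemma inv_all (a : ℕ → ℕ) : ∀ t, Inv a t := by
  intro t
  induction t with
  | zero =>
    refine ⟨fun v _ => rfl, fun v _ => rfl, fun v => le_refl 0, ?_, ?_⟩
    · intro v w hv
      simp [cbCfg] at hv
    · intro v j hv
      simp [cbCfg] at hv
  | succ t ih => exact inv_step ih

end Step


theorem counting_backoff_stack_invariant' (a : ℕ → ℕ) (t : ℕ)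
    (hk : 0 < ((Finset.range t).filter fun v => 0 < (cbCfg a t).1 v).card) :
    let k : ℤ := ((Finset.range t).filter fun v => 0 < (cbCfg a t).1 v).card
    let S : Finset ℕ := ((Finset.range t).filter fun v => 0 < (cbCfg a t).1 v).filter
      fun v => 0 < (cbCfg a (t + 1)).1 v ∧ 0 < (cbCfg a (t + 1)).2 v
    (∀ v ∈ S, 1 ≤ (cbCfg a (t + 1)).2 v ∧ (cbCfg a (t + 1)).2 v ≤ k) ∧
    (∀ v ∈ S, ∀ w ∈ S, v < w → (cbCfg a (t + 1)).2 w < (cbCfg a (t + 1)).2 v) ∧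
    (∀ j : ℤ, 2 ≤ j → j ≤ k → ∃ v ∈ S, (cbCfg a (t + 1)).2 v = j) := by
  intro k S
  have ih := Step.inv_all a t
  have ih' := Step.inv_all a (t + 1)
  have hcard2 : (txSet a t).card ≤ 2 := tx_card_le ih
  have hk1 : (1 : ℤ) ≤ k := by
    have : (1 : ℤ) ≤ (((Finset.range t).filter fun v => 0 < (cbCfg a t).1 v).card : ℤ) := by
      exact_mod_cast hk
    exact this
  have htxA : txSet a t ⊆ (Finset.range t).filter fun v => 0 < (cbCfg a t).1 v := by
    intro v hv
    obtain ⟨h1, h2, h3⟩ := Finset.mem_filter.mp hv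
    exact Finset.mem_filter.mpr ⟨h1, h2⟩
  have htxk : ((txSet a t).card : ℤ) ≤
      (((Finset.range t).filter fun v => 0 < (cbCfg a t).1 v).card : ℤ) := by
    exact_mod_cast Finset.card_le_card htxA
  have hSdef : ∀ v ∈ S, 0 < (cbCfg a t).1 v ∧ 0 < (cbCfg a (t+1)).1 v ∧
      0 < (cbCfg a (t+1)).2 v := by
    intro v hv
    obtain ⟨h1, h2⟩ := Finset.mem_filter.mp hv
    exact ⟨(Finset.mem_filter.mp h1).2, h2⟩
  have hSmem : ∀ v, 0 < (cbCfg a (t+1)).1 v → 0 < (cbCfg a (t+1)).2 v → v ∈ S := by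
    intro v h1 h2
    have h3 : 0 < (cbCfg a t).1 v := ctr_back ih h2
    exact Finset.mem_filter.mpr
      ⟨Finset.mem_filter.mpr ⟨Finset.mem_range.mpr (active_lt ih h3), h3⟩, h1, h2⟩
  have h012 : (txSet a t).card = 0 ∨ (txSet a t).card = 1 ∨ (txSet a t).card = 2 := by
    omega
  refine ⟨?_, ?_, ?_⟩
  · -- values in [1, k]
    intro v hv
    obtain ⟨hpv, hpv', hcv'⟩ := hSdef v hv
    refine ⟨by omega, ?_⟩
    show (cbCfg a (t+1)).2 v ≤ (((Finset.range t).filter fun w => 0 < (cbCfg a t).1 w).card : ℤ)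
    rcases h012 with h0 | h1 | h2
    · have hvtx : v ∉ txSet a t := by
        rw [Finset.card_eq_zero] at h0
        simp [h0]
      have hge := notin_tx ih hpv hvtx
      have hcg := count_ge ih hpv hge
      rw [ctr_silent h0 hpv]
      omega
    · by_cases hvtx : v ∈ txSet a t
      · rw [ctr_succ, if_neg (by omega), if_pos ⟨hvtx, h1⟩]
        have : (1:ℤ) ≤ (((Finset.range t).filter fun w => 0 < (cbCfg a t).1 w).card : ℤ) := hk1
        split_ifs <;> omega
      · have hge := notin_tx ih hpv hvtx
        have hcg := count_ge ih hpv hge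
        rw [ctr_skip h1 hpv hvtx]
        omega
    · rw [ctr_coll (by omega) hpv]
      by_cases hvtx : v ∈ txSet a t
      · have hle := (in_tx hvtx).2
        have : ((txSet a t).card : ℤ) ≤ (((Finset.range t).filter fun w => 0 < (cbCfg a t).1 w).card : ℤ) := htxk
        omega
      · have hge := notin_tx ih hpv hvtx
        have hcg := count_ge ih hpv hge
        omega
  · -- inverse order of activation
    intro v hv w hw hvw
    exact ih'.anti v w (hSdef v hv).2.1 (hSdef w hw).2.1 hvw
  · -- all values in [2, k] assigned
    intro j hj2 hjk
    have hjk' : j ≤ (((Finset.range t).filter fun w => 0 < (cbCfg a t).1 w).card : ℤ) := hjk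
    have hbig : ∃ u, 0 < (cbCfg a (t+1)).1 u ∧
        (((Finset.range t).filter fun w => 0 < (cbCfg a t).1 w).card : ℤ) ≤ (cbCfg a (t+1)).2 u := by
      rcases h012 with h0 | h1 | h2
      · have htx0 : txSet a t = ∅ := Finset.card_eq_zero.mp h0
        obtain ⟨u, huB, hu⟩ := exists_big ih
          ((Finset.range t).filter fun w => 0 < (cbCfg a t).1 w) 2
          (fun u hu => (Finset.mem_filter.mp hu).2)
          (fun u hu => notin_tx ih (Finset.mem_filter.mp hu).2 (by simp [htx0]))
          (Finset.card_pos.mp hk)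
        have hpu := (Finset.mem_filter.mp huB).2
        refine ⟨u, ?_, ?_⟩
        · rw [pend_eq ih hpu (fun h => by omega)]; exact hpu
        · rw [ctr_silent h0 hpu]; omega
      · set B := ((Finset.range t).filter fun w => 0 < (cbCfg a t).1 w) \ txSet a t with hB
        have hBcard : B.card =
            ((Finset.range t).filter fun w => 0 < (cbCfg a t).1 w).card - 1 := by
          rw [hB, Finset.card_sdiff_of_subset htxA, h1]
        have hBA : ∀ u ∈ B, 0 < (cbCfg a t).1 u := by
          intro u hu
          exact (Finset.mem_filter.mp (Finset.mem_sdiff.mp hu).1).2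
        have hBtx : ∀ u ∈ B, u ∉ txSet a t := fun u hu => (Finset.mem_sdiff.mp hu).2
        by_cases hone : ((Finset.range t).filter fun w => 0 < (cbCfg a t).1 w).card = 1
        · exfalso
          have : (2:ℤ) ≤ j := hj2
          omega
        · have hBne : B.Nonempty := by
            rw [← Finset.card_pos, hBcard]
            omega
          obtain ⟨u, huB, hu⟩ := exists_big ih B 2 hBA
            (fun u hu => notin_tx ih (hBA u hu) (hBtx u hu)) hBne
          have hpu := hBA u huB
          refine ⟨u, ?_, ?_⟩
          · rw [pend_eq ih hpu (fun h => (hBtx u huB) h.1)]; exact hpu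
          · rw [ctr_skip h1 hpu (hBtx u huB), hBcard] at *
            push_cast at hu ⊢
            omega
      · by_cases hktwo : ((Finset.range t).filter fun w => 0 < (cbCfg a t).1 w).card = 2
        · -- find the transmitter with counter 1
          obtain ⟨u, hutx, hu⟩ := exists_big ih (txSet a t) 0
            (fun u hu => (in_tx hu).1) (fun u _ => ih.nonneg u)
            (Finset.card_pos.mp (by omega))
          have hpu := (in_tx hutx).1
          have hcu : (cbCfg a t).2 u = 1 := by
            have := (in_tx hutx).2
            rw [h2] at hu
            omega
          refine ⟨u, ?_, ?_⟩
          · rw [pend_eq ih hpu (fun h => by omega)]; exact hpu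
          · rw [ctr_coll (by omega) hpu, hcu, hktwo]
            norm_num
        · set B := ((Finset.range t).filter fun w => 0 < (cbCfg a t).1 w) \ txSet a t with hB
          have hBcard : B.card =
              ((Finset.range t).filter fun w => 0 < (cbCfg a t).1 w).card - 2 := by
            rw [hB, Finset.card_sdiff_of_subset htxA, h2]
          have hBA : ∀ u ∈ B, 0 < (cbCfg a t).1 u := by
            intro u hu
            exact (Finset.mem_filter.mp (Finset.mem_sdiff.mp hu).1).2
          have hBtx : ∀ u ∈ B, u ∉ txSet a t := fun u hu => (Finset.mem_sdiff.mp hu).2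
          have hklarge : 2 ≤ ((Finset.range t).filter fun w => 0 < (cbCfg a t).1 w).card := by
            have := Finset.card_le_card htxA
            omega
          have hBne : B.Nonempty := by
            rw [← Finset.card_pos, hBcard]
            omega
          obtain ⟨u, huB, hu⟩ := exists_big ih B 2 hBA
            (fun u hu => notin_tx ih (hBA u hu) (hBtx u hu)) hBne
          have hpu := hBA u huB
          refine ⟨u, ?_, ?_⟩
          · rw [pend_eq ih hpu (fun h => by omega)]; exact hpu
          · rw [ctr_coll (by omega) hpu, hBcard] at *
            push_cast [hklarge] at hu ⊢
            omega
    obtain ⟨u, hu1, hu2⟩ := hbig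
    obtain ⟨w, hw1, hw2⟩ := ih'.surj u j hu1 hj2 (le_trans hjk' hu2)
    exact ⟨w, hSmem w hw1 (by omega), hw2⟩

end CBAux

/-- stack invariant for Counting-Backoff: for every round `t` in whose
beginning `k > 0` stations are active, at the end of round `t` (the beginning of round
`t+1`), among the stations that were active at the beginning of the round, remain active
and have a positive backoff_counter: each counter value lies in `[1, k]`; the values are
assigned in the inverse order of activation times (a later-activated station has a smaller
value, in particular all values are distinct); and every value in `[2, k]` is assigned,
i.e. the only value in `[1, k]` that may be unassigned is `1`.  Hence the positive values
of backoff_counter are positions on a global LIFO stack with counter `1` on top. -/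
theorem counting_backoff_stack_invariant (a : ℕ → ℕ) (t : ℕ)
    (hk : 0 < ((Finset.range t).filter fun v => 0 < (cbCfg a t).1 v).card) :
    let k : ℤ := ((Finset.range t).filter fun v => 0 < (cbCfg a t).1 v).card
    let S : Finset ℕ := ((Finset.range t).filter fun v => 0 < (cbCfg a t).1 v).filter
      fun v => 0 < (cbCfg a (t + 1)).1 v ∧ 0 < (cbCfg a (t + 1)).2 v
    (∀ v ∈ S, 1 ≤ (cbCfg a (t + 1)).2 v ∧ (cbCfg a (t + 1)).2 v ≤ k) ∧
    (∀ v ∈ S, ∀ w ∈ S, v < w → (cbCfg a (t + 1)).2 w < (cbCfg a (t + 1)).2 v) ∧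
    (∀ j : ℤ, 2 ≤ j → j ≤ k → ∃ v ∈ S, (cbCfg a (t + 1)).2 v = j) :=
  CBAux.counting_backoff_stack_invariant' a t hk
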